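/- Let p ≥ 2, γ ≥ 1 and a, b, c, d ∈ ℝ. Then (J_p(a-c) - J_p(b-d))·(J_{γ+1}(a-b) - J_{γ+1}(c-d)) ≥ C(p,γ)·| |a-b|^((γ-1)/p)·(a-b) - |c-d|^((γ-1)/p)·(c-d) |^p, where C(p,γ) = (γ/(3·2^(p-1)))·(p/(γ-1+p))^p. -/

import Mathlib

open Real

lemma phi_rpow {c u : ℝ} (hc : 0 ≤ c) (hu : 0 ≤ u) : |u| ^ c * u = u ^ (c + 1) := by
  rcases eq_or_lt_of_le hu with rfl | hu'
  · simp [Real.zero_rpow (by positivity : c + 1 ≠ 0)]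
  · rw [abs_of_pos hu', Real.rpow_add_one hu'.ne']

lemma phi_strictMono {c : ℝ} (hc : 0 ≤ c) : StrictMono (fun u : ℝ => |u| ^ c * u) := by
  have key : ∀ u v : ℝ, 0 ≤ u → u < v → |u| ^ c * u < |v| ^ c * v := by
    intro u v hu huv
    rw [phi_rpow hc hu, phi_rpow hc (hu.trans huv.le)]
    exact Real.rpow_lt_rpow hu huv (by positivity)
  intro u v huv
  show |u| ^ c * u < |v| ^ c * v
  rcases le_or_gt 0 u with hu | hu
  · exact key u v hu huv
  rcases le_or_gt v 0 with hv | hv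
  · have := key (-v) (-u) (by linarith) (by linarith)
    simp only [abs_neg, mul_neg] at this
    linarith
  · have h1 : |u| ^ c * u < 0 := mul_neg_of_pos_of_neg (Real.rpow_pos_of_pos (abs_pos.2 hu.ne) c) hu
    have h2 : 0 ≤ |v| ^ c * v := mul_nonneg (Real.rpow_nonneg (abs_nonneg v) c) hv.le
    linarith

lemma phi_hasDerivAt {c : ℝ} (hc : 0 ≤ c) (u : ℝ) :
    HasDerivAt (fun u : ℝ => |u| ^ c * u) ((c + 1) * |u| ^ c) u := by
  rcases lt_trichotomy u 0 with hu | rfl | hu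
  · have h1 : HasDerivAt (fun x : ℝ => -((-x) ^ (c + 1))) ((c + 1) * (-u) ^ c) u := by
      have h2 := (Real.hasDerivAt_rpow_const (p := c + 1) (Or.inl (neg_ne_zero.2 hu.ne))).comp u
        (hasDerivAt_neg u)
      have h3 := h2.neg
      refine h3.congr_deriv ?_
      rw [show c + 1 - 1 = c from by ring]
      ring
    have heq : (fun x : ℝ => |x| ^ c * x) =ᶠ[nhds u] fun x : ℝ => -((-x) ^ (c + 1)) := by
      filter_upwards [Iio_mem_nhds hu] with x hx
      have hx' : (0:ℝ) < -x := by simpa using hx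
      rw [abs_of_neg hx, ← phi_rpow hc hx'.le, abs_of_pos hx']
      ring
    rw [abs_of_neg hu]
    exact h1.congr_of_eventuallyEq heq
  · rcases eq_or_lt_of_le hc with rfl | hc'
    · simpa using (hasDerivAt_id (0:ℝ)).congr_of_eventuallyEq
        (by filter_upwards with x; simp)
    · have : HasDerivAt (fun u : ℝ => |u| ^ c * u) 0 0 := by
        rw [hasDerivAt_iff_tendsto_slope]
        have hcont : Filter.Tendsto (fun x : ℝ => |x| ^ c) (nhdsWithin 0 {(0:ℝ)}ᶜ) (nhds 0) := by
          have h4 : ContinuousAt (fun x : ℝ => |x| ^ c) 0 := by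
            exact (Real.continuousAt_rpow_const _ _ (Or.inr hc)).comp continuous_abs.continuousAt
          have := h4.continuousWithinAt (s := {(0:ℝ)}ᶜ)
          simpa [Real.zero_rpow hc'.ne'] using this.tendsto
        refine hcont.congr' ?_
        filter_upwards [self_mem_nhdsWithin] with x hx
        have hx' : x ≠ 0 := hx
        rw [slope_def_field]
        field_simp [slope_def_field]
        simp
      simpa [Real.zero_rpow hc'.ne'] using this
  · have h1 : HasDerivAt (fun x : ℝ => x ^ (c + 1)) ((c + 1) * u ^ c) u := by
      have := Real.hasDerivAt_rpow_const (p := c + 1) (Or.inl hu.ne')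
      simpa using this
    have heq : (fun x : ℝ => |x| ^ c * x) =ᶠ[nhds u] fun x : ℝ => x ^ (c + 1) := by
      filter_upwards [Ioi_mem_nhds hu] with x hx
      exact phi_rpow hc (le_of_lt hx)
    rw [abs_of_pos hu]
    exact h1.congr_of_eventuallyEq heq

lemma rpow_superadd {a b q : ℝ} (ha : 0 ≤ a) (hb : 0 ≤ b) (hq : 1 ≤ q) :
    a ^ q + b ^ q ≤ (a + b) ^ q := by
  have h := NNReal.add_rpow_le_rpow_add a.toNNReal b.toNNReal hq
  rw [← NNReal.coe_le_coe] at h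
  push_cast at h
  rwa [Real.coe_toNNReal a ha, Real.coe_toNNReal b hb] at h

lemma rpow_convex_two {a b q : ℝ} (ha : 0 ≤ a) (hb : 0 ≤ b) (hq : 1 ≤ q) :
    (a + b) ^ q ≤ 2 ^ (q - 1) * (a ^ q + b ^ q) := by
  have h := NNReal.rpow_add_le_mul_rpow_add_rpow a.toNNReal b.toNNReal hq
  rw [← NNReal.coe_le_coe] at h
  push_cast at h
  rwa [Real.coe_toNNReal a ha, Real.coe_toNNReal b hb] at h

lemma L1 {p x y : ℝ} (hp : 2 ≤ p) (hxy : y ≤ x) :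
    2 ^ (2 - p) * (x - y) ^ (p - 1) ≤ |x| ^ (p - 2) * x - |y| ^ (p - 2) * y := by
  have hc : (0:ℝ) ≤ p - 2 := by linarith
  have hq : (1:ℝ) ≤ p - 1 := by linarith
  have h2 : (2:ℝ) ^ (2 - p) ≤ 1 := Real.rpow_le_one_of_one_le_of_nonpos one_le_two (by linarith)
  have h2' : (0:ℝ) ≤ 2 ^ (2 - p) := Real.rpow_nonneg (by norm_num) _
  have key : ∀ x y : ℝ, 0 ≤ y → y ≤ x →
      2 ^ (2 - p) * (x - y) ^ (p - 1) ≤ |x| ^ (p - 2) * x - |y| ^ (p - 2) * y := by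
    intro x y hy hxy
    have hx : 0 ≤ x := hy.trans hxy
    rw [phi_rpow hc hx, phi_rpow hc hy, show p - 2 + 1 = p - 1 from by ring]
    have h3 : y ^ (p - 1) + (x - y) ^ (p - 1) ≤ x ^ (p - 1) := by
      have := rpow_superadd hy (by linarith : (0:ℝ) ≤ x - y) hq
      rwa [add_sub_cancel] at this
    have h4 : 2 ^ (2 - p) * (x - y) ^ (p - 1) ≤ (x - y) ^ (p - 1) := by
      nlinarith [Real.rpow_nonneg (show (0:ℝ) ≤ x - y by linarith) (p - 1)]
    linarith
  rcases le_or_gt 0 y with hy | hy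
  · exact key x y hy hxy
  rcases le_or_gt x 0 with hx | hx
  · have := key (-y) (-x) (by linarith) (by linarith)
    simp only [abs_neg, mul_neg] at this
    have heq : -y - -x = x - y := by ring
    rw [heq] at this
    linarith
  · have hx' : |x| ^ (p - 2) * x = x ^ (p - 1) := by
      rw [phi_rpow hc hx.le, show p - 2 + 1 = p - 1 from by ring]
    have hy' : |y| ^ (p - 2) * y = -((-y) ^ (p - 1)) := by
      have h := phi_rpow hc (show (0:ℝ) ≤ -y by linarith)
      rw [abs_neg, show p - 2 + 1 = p - 1 from by ring] at h
      linear_combination -h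
    rw [hx', hy']
    have h5 := rpow_convex_two hx.le (by linarith : (0:ℝ) ≤ -y) hq
    rw [show p - 1 - 1 = p - 2 from by ring] at h5
    have h6 := mul_le_mul_of_nonneg_left h5 h2'
    have h7 : (2:ℝ) ^ (2 - p) * 2 ^ (p - 2) = 1 := by
      rw [← Real.rpow_add (by norm_num : (0:ℝ) < 2)]
      norm_num
    have hxy' : x + -y = x - y := by ring
    rw [hxy'] at h6
    calc 2 ^ (2 - p) * (x - y) ^ (p - 1)
        ≤ 2 ^ (2 - p) * (2 ^ (p - 2) * (x ^ (p - 1) + (-y) ^ (p - 1))) := h6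
      _ = x ^ (p - 1) + (-y) ^ (p - 1) := by rw [← mul_assoc, h7, one_mul]
      _ = x ^ (p - 1) - -((-y) ^ (p - 1)) := by ring

lemma young_pointwise {p K w : ℝ} (hp : 2 ≤ p) (hK : 0 < K) (hw : 0 ≤ w) :
    w ≤ K ^ (1 - p) * w ^ p / p + K * (p - 1) / p := by
  have hp1 : (1:ℝ) < p := by linarith
  have hp0 : (0:ℝ) < p := by linarith
  have hq : p.HolderConjugate (p / (p - 1)) := Real.HolderConjugate.conjExponent hp1
  have ha : 0 ≤ w * K ^ ((1 - p) / p) := mul_nonneg hw (Real.rpow_nonneg hK.le _)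
  have hb : (0:ℝ) ≤ K ^ ((p - 1) / p) := Real.rpow_nonneg hK.le _
  have h := Real.young_inequality_of_nonneg ha hb hq
  have e1 : w * K ^ ((1 - p) / p) * K ^ ((p - 1) / p) = w := by
    rw [mul_assoc, ← Real.rpow_add hK, show (1 - p) / p + (p - 1) / p = 0 from by ring,
      Real.rpow_zero, mul_one]
  have e2 : (w * K ^ ((1 - p) / p)) ^ p = w ^ p * K ^ (1 - p) := by
    rw [Real.mul_rpow hw (Real.rpow_nonneg hK.le _), ← Real.rpow_mul hK.le,
      div_mul_cancel₀ _ hp0.ne']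
  have e3 : (K ^ ((p - 1) / p)) ^ (p / (p - 1)) = K := by
    rw [← Real.rpow_mul hK.le,
      show (p - 1) / p * (p / (p - 1)) = 1 from by
        have : p - 1 ≠ 0 := by linarith
        field_simp,
      Real.rpow_one]
  rw [e1, e2, e3, div_div_eq_mul_div, mul_comm (w ^ p)] at h
  exact h

lemma L2 {p γ s t : ℝ} (hp : 2 ≤ p) (hγ : 1 ≤ γ) (hst : t ≤ s) :
    (|s| ^ ((γ - 1) / p) * s - |t| ^ ((γ - 1) / p) * t) ^ p
      ≤ ((γ - 1 + p) / p) ^ p / γ * ((s - t) ^ (p - 1) *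
          (|s| ^ (γ - 1) * s - |t| ^ (γ - 1) * t)) := by
  have hp0 : (0:ℝ) < p := by linarith
  have hγ0 : (0:ℝ) < γ := by linarith
  have hγ1 : (0:ℝ) ≤ γ - 1 := by linarith
  have hc : (0:ℝ) ≤ (γ - 1) / p := by positivity
  have hm : (0:ℝ) < (γ - 1 + p) / p := by positivity
  set m := (γ - 1 + p) / p with hm_def
  set c := (γ - 1) / p with hc_def
  have hcm : c + 1 = m := by rw [hc_def, hm_def]; field_simp
  rcases eq_or_lt_of_le hst with rfl | hst'
  · simp only [sub_self]
    rw [Real.zero_rpow hp0.ne']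
    simp
  have hB : (0:ℝ) < s - t := by linarith
  have hD : (0:ℝ) < |s| ^ c * s - |t| ^ c * t := sub_pos.2 (phi_strictMono hc hst')
  have hC : (0:ℝ) < |s| ^ (γ - 1) * s - |t| ^ (γ - 1) * t := sub_pos.2 (phi_strictMono hγ1 hst')
  set D := |s| ^ c * s - |t| ^ c * t
  set C := |s| ^ (γ - 1) * s - |t| ^ (γ - 1) * t
  set B := s - t
  have hM : (0:ℝ) < m ^ p / γ := by positivity
  set M := m ^ p / γ with hM_def
  -- Young-based linear bound, for every K > 0
  have hyoung : ∀ K : ℝ, 0 < K → D ≤ K ^ (1 - p) / p * M * C + K * (p - 1) / p * B := by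
    intro K hK
    set A₁ := K ^ (1 - p) / p * M with hA₁
    set A₂ := K * (p - 1) / p with hA₂
    set G : ℝ → ℝ := fun u => A₁ * (|u| ^ (γ - 1) * u) + A₂ * u - |u| ^ c * u with hG_def
    have hG : ∀ u, HasDerivAt G
        (A₁ * ((γ - 1 + 1) * |u| ^ (γ - 1)) + A₂ * 1 - (c + 1) * |u| ^ c) u := fun u =>
      (((phi_hasDerivAt hγ1 u).const_mul A₁).add ((hasDerivAt_id u).const_mul A₂)).sub
        (phi_hasDerivAt hc u)
    have hdiff : Differentiable ℝ G := fun u => (hG u).differentiableAt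
    have hderiv : ∀ u, 0 ≤ deriv G u := by
      intro u
      rw [(hG u).deriv]
      have hw : (0:ℝ) ≤ m * |u| ^ c := mul_nonneg hm.le (Real.rpow_nonneg (abs_nonneg u) _)
      have hyp := young_pointwise hp hK hw
      have hwp : (m * |u| ^ c) ^ p = m ^ p * |u| ^ (γ - 1) := by
        rw [Real.mul_rpow hm.le (Real.rpow_nonneg (abs_nonneg u) _),
          ← Real.rpow_mul (abs_nonneg u), hc_def, div_mul_cancel₀ _ hp0.ne']
      rw [hwp] at hyp
      rw [hcm]
      have hexp : A₁ * ((γ - 1 + 1) * |u| ^ (γ - 1))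
          = K ^ (1 - p) * (m ^ p * |u| ^ (γ - 1)) / p := by
        rw [hA₁, hM_def]
        field_simp
        ring
      rw [hexp]
      linarith
    have h := monotone_of_deriv_nonneg hdiff hderiv hst
    simp only [hG_def] at h
    simp only [D, C, B]
    linarith
  -- optimal choice of K
  set K := (M * C / B) ^ (1 / p) with hK_def
  have hMCB : (0:ℝ) < M * C / B := by positivity
  have hK : (0:ℝ) < K := Real.rpow_pos_of_pos hMCB _
  have hKp : K ^ p = M * C / B := by
    rw [hK_def, ← Real.rpow_mul hMCB.le, one_div, inv_mul_cancel₀ hp0.ne', Real.rpow_one]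
  have hbound : D ≤ K * B := by
    have h := hyoung K hK
    have e : K ^ (1 - p) / p * M * C + K * (p - 1) / p * B = K * B := by
      have e2 : M * C = K ^ p * B := by rw [hKp]; field_simp
      rw [mul_assoc, e2, ← mul_assoc, div_mul_eq_mul_div, ← Real.rpow_add hK,
        show 1 - p + p = 1 from by ring, Real.rpow_one]
      field_simp
      ring
    exact h.trans (le_of_eq e)
  have hfinal : D ^ p ≤ (K * B) ^ p := Real.rpow_le_rpow hD.le hbound hp0.le
  have e3 : (K * B) ^ p = M * (B ^ (p - 1) * C) := by
    rw [Real.mul_rpow hK.le hB.le, hKp]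
    rw [show p = p - 1 + 1 from by ring, Real.rpow_add_one hB.ne']
    field_simp
    ring
  calc D ^ p ≤ (K * B) ^ p := hfinal
    _ = M * (B ^ (p - 1) * C) := e3

lemma core {p γ x y s t : ℝ} (hp : 2 ≤ p) (hγ : 1 ≤ γ) (hd : x - y = s - t) (hst : t ≤ s) :
    γ / (3 * 2 ^ (p - 1)) * (p / (γ - 1 + p)) ^ p *
        |(|s| ^ ((γ - 1) / p) * s - |t| ^ ((γ - 1) / p) * t)| ^ p
      ≤ (|x| ^ (p - 2) * x - |y| ^ (p - 2) * y) * (|s| ^ (γ - 1) * s - |t| ^ (γ - 1) * t) := by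
  have hp0 : (0:ℝ) < p := by linarith
  have hγ0 : (0:ℝ) < γ := by linarith
  have hγ1 : (0:ℝ) ≤ γ - 1 := by linarith
  have hβ : (0:ℝ) < γ - 1 + p := by linarith
  have hc : (0:ℝ) ≤ (γ - 1) / p := by positivity
  have hD : 0 ≤ |s| ^ ((γ - 1) / p) * s - |t| ^ ((γ - 1) / p) * t :=
    sub_nonneg.2 ((phi_strictMono hc).monotone hst)
  have hC : 0 ≤ |s| ^ (γ - 1) * s - |t| ^ (γ - 1) * t :=
    sub_nonneg.2 ((phi_strictMono hγ1).monotone hst)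
  have hxy : y ≤ x := by
    have : 0 ≤ x - y := by rw [hd]; linarith
    linarith
  have h1 := L1 hp hxy
  rw [hd] at h1
  have h2 := L2 hp hγ hst
  have hT : (0:ℝ) < 2 ^ (p - 1) := Real.rpow_pos_of_pos two_pos _
  set T := (2:ℝ) ^ (p - 1) with hT_def
  have hm : (0:ℝ) < (γ - 1 + p) / p := by positivity
  have hmp : (0:ℝ) < ((γ - 1 + p) / p) ^ p := Real.rpow_pos_of_pos hm _
  set Mp := ((γ - 1 + p) / p) ^ p with hMp_def
  have hpm : (p / (γ - 1 + p)) ^ p = Mp⁻¹ := by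
    rw [hMp_def, show p / (γ - 1 + p) = ((γ - 1 + p) / p)⁻¹ from by
      rw [inv_div], Real.inv_rpow hm.le]
  have h2T : (2:ℝ) ^ (2 - p) = 2 * T⁻¹ := by
    rw [eq_mul_inv_iff_mul_eq₀ hT.ne', hT_def, ← Real.rpow_add two_pos]
    norm_num
  set D := |s| ^ ((γ - 1) / p) * s - |t| ^ ((γ - 1) / p) * t
  set C := |s| ^ (γ - 1) * s - |t| ^ (γ - 1) * t
  set B := s - t
  have hDp : (0:ℝ) ≤ D ^ p := Real.rpow_nonneg hD _
  -- from L2 : γ/Mp * D^p ≤ B^(p-1) * C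
  have h3 : γ / Mp * D ^ p ≤ B ^ (p - 1) * C := by
    have h := mul_le_mul_of_nonneg_left h2 (le_of_lt (div_pos hγ0 hmp))
    have e : γ / Mp * (Mp / γ * (B ^ (p - 1) * C)) = B ^ (p - 1) * C := by
      field_simp
    calc γ / Mp * D ^ p ≤ γ / Mp * (Mp / γ * (B ^ (p - 1) * C)) := h
      _ = B ^ (p - 1) * C := e
  have h2nn : (0:ℝ) ≤ 2 ^ (2 - p) := Real.rpow_nonneg (by norm_num) _
  have h4 : 2 ^ (2 - p) * (γ / Mp * D ^ p) ≤ 2 ^ (2 - p) * (B ^ (p - 1) * C) :=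
    mul_le_mul_of_nonneg_left h3 h2nn
  have h6 : 2 ^ (2 - p) * B ^ (p - 1) * C ≤ (|x| ^ (p - 2) * x - |y| ^ (p - 2) * y) * C :=
    mul_le_mul_of_nonneg_right h1 hC
  rw [abs_of_nonneg hD, hpm]
  have hcoef : γ / (3 * T) * Mp⁻¹ * D ^ p ≤ 2 ^ (2 - p) * (γ / Mp * D ^ p) := by
    rw [h2T]
    have key : (0:ℝ) ≤ 5 / 3 * (T⁻¹ * (γ * (Mp⁻¹ * D ^ p))) := by positivity
    have e : 2 * T⁻¹ * (γ / Mp * D ^ p) - γ / (3 * T) * Mp⁻¹ * D ^ p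
        = 5 / 3 * (T⁻¹ * (γ * (Mp⁻¹ * D ^ p))) := by
      rw [div_eq_mul_inv γ Mp, div_eq_mul_inv γ (3 * T), mul_inv]
      ring
    linarith
  calc γ / (3 * T) * Mp⁻¹ * D ^ p
      ≤ 2 ^ (2 - p) * (γ / Mp * D ^ p) := hcoef
    _ ≤ 2 ^ (2 - p) * (B ^ (p - 1) * C) := h4
    _ = 2 ^ (2 - p) * B ^ (p - 1) * C := by ring
    _ ≤ (|x| ^ (p - 2) * x - |y| ^ (p - 2) * y) * C := h6

/-- `J r t = |t|^(r-2) · t`. -/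
noncomputable def J (r t : ℝ) : ℝ := |t| ^ (r - 2) * t

theorem stmt1 (p γ a b c d : ℝ) (hp : 2 ≤ p) (hγ : 1 ≤ γ) :
    (γ / (3 * 2 ^ (p - 1))) * (p / (γ - 1 + p)) ^ p *
        |(|a - b| ^ ((γ - 1) / p) * (a - b) - |c - d| ^ ((γ - 1) / p) * (c - d))| ^ p
      ≤ (J p (a - c) - J p (b - d)) * (J (γ + 1) (a - b) - J (γ + 1) (c - d)) := by
  simp only [J]
  rw [show γ + 1 - 2 = γ - 1 from by ring]
  rcases le_total (c - d) (a - b) with h | h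
  · exact core hp hγ (by ring) h
  · have hcore := core (x := b - d) (y := a - c) (s := c - d) (t := a - b) hp hγ (by ring) h
    rw [abs_sub_comm]
    exact hcore.trans (le_of_eq (by ring))
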